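/- (Perturbation norm bound.) Let Φ ∈ ℝ^{N×N}, Γ ∈ ℝ^{N×p}, Ξ ∈ ℝ^{N×n} with ‖Ξ‖ ≤ 1, and suppose there exist c ≥ 1 and γ ∈ (0,1) such that ‖Φ^t‖ ≤ c γ^t for all t ∈ ℕ, where ‖·‖ is the induced 2-norm. Let ℓ ≥ 1 and let d₁ : ℕ → ℝ^p, d₂ : ℕ → ℝ^n satisfy ‖d₁(t)‖ ≤ 2^{−ℓ−1}√p and ‖d₂(t)‖ ≤ (3/2)·2^{−ℓ}√n for all t. If ε(0) = 0 and ε(t+1) = Φ ε(t) − Γ d₁(t) − Ξ d₂(t), then for all t ∈ ℕ: ‖ε(t)‖ < 2^{−ℓ} ((√p/2)·‖Γ‖ + 2√n)·c/(1 − γ). -/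

import Mathlib

open scoped Matrix.Norms.L2Operator

/-- The Euclidean (`ℓ²`) norm of a finitely-indexed real vector. -/
noncomputable def e2norm {ι : Type*} [Fintype ι] (v : ι → ℝ) : ℝ :=
  ‖(WithLp.equiv 2 (ι → ℝ)).symm v‖

lemma e2norm_eq {ι : Type*} [Fintype ι] (v : ι → ℝ) :
    e2norm v = ‖(WithLp.linearEquiv 2 ℝ (ι → ℝ)).symm v‖ := rfl

lemma e2norm_nonneg {ι : Type*} [Fintype ι] (v : ι → ℝ) : 0 ≤ e2norm v :=
  norm_nonneg _

lemma e2norm_neg {ι : Type*} [Fintype ι] (v : ι → ℝ) : e2norm (-v) = e2norm v := by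
  rw [e2norm_eq, map_neg, norm_neg, ← e2norm_eq]

lemma e2norm_add_le {ι : Type*} [Fintype ι] (u v : ι → ℝ) :
    e2norm (u + v) ≤ e2norm u + e2norm v := by
  rw [e2norm_eq, map_add]; exact norm_add_le _ _

lemma e2norm_sum_le {ι α : Type*} [Fintype ι] (s : Finset α) (f : α → ι → ℝ) :
    e2norm (∑ i ∈ s, f i) ≤ ∑ i ∈ s, e2norm (f i) := by
  rw [e2norm_eq, map_sum]; exact norm_sum_le _ _

lemma e2norm_mulVec {m n : ℕ} (A : Matrix (Fin m) (Fin n) ℝ) (v : Fin n → ℝ) :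
    e2norm (A.mulVec v) ≤ ‖A‖ * e2norm v :=
  A.l2_opNorm_mulVec ((WithLp.equiv 2 _).symm v)

/-- Perturbation norm bound: Suppose `‖Ξ‖ ≤ 1`, `‖Φ^t‖ ≤ c γ^t` with
`c ≥ 1`, `γ ∈ (0,1)` (induced 2-norms), `‖d₁(t)‖ ≤ 2^{−ℓ−1}√p`,
`‖d₂(t)‖ ≤ (3/2)·2^{−ℓ}√n`, `ε(0) = 0`, and
`ε(t+1) = Φ ε(t) − Γ d₁(t) − Ξ d₂(t)`.  Then for all `t`,
`‖ε(t)‖ < 2^{−ℓ} ((√p/2)·‖Γ‖ + 2√n)·c/(1 − γ)`. -/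
theorem stmt_11 (N p n : ℕ) (hN : 1 ≤ N) (hp : 1 ≤ p) (hn : 1 ≤ n)
    (Φ : Matrix (Fin N) (Fin N) ℝ) (Γ : Matrix (Fin N) (Fin p) ℝ)
    (Ξ : Matrix (Fin N) (Fin n) ℝ) (hΞ : ‖Ξ‖ ≤ 1)
    (c γ : ℝ) (hc : 1 ≤ c) (hγ0 : 0 < γ) (hγ1 : γ < 1)
    (hΦ : ∀ t : ℕ, ‖Φ ^ t‖ ≤ c * γ ^ t)
    (ℓ : ℕ) (hℓ : 1 ≤ ℓ)
    (d₁ : ℕ → Fin p → ℝ) (d₂ : ℕ → Fin n → ℝ)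
    (hd₁ : ∀ t : ℕ, e2norm (d₁ t) ≤ (2 : ℝ) ^ (-(ℓ : ℤ) - 1) * Real.sqrt p)
    (hd₂ : ∀ t : ℕ, e2norm (d₂ t) ≤ (3 / 2) * (2 : ℝ) ^ (-(ℓ : ℤ)) * Real.sqrt n)
    (ε : ℕ → Fin N → ℝ) (hε0 : ε 0 = 0)
    (hεrec : ∀ t : ℕ,
      ε (t + 1) = Φ.mulVec (ε t) - Γ.mulVec (d₁ t) - Ξ.mulVec (d₂ t)) :
    ∀ t : ℕ, e2norm (ε t) <
      (2 : ℝ) ^ (-(ℓ : ℤ)) * ((Real.sqrt p / 2) * ‖Γ‖ + 2 * Real.sqrt n) *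
        (c / (1 - γ)) := by
  intro t
  set b₁ : ℝ := (2 : ℝ) ^ (-(ℓ : ℤ) - 1) * Real.sqrt p with hb₁
  set b₂ : ℝ := (3 / 2) * (2 : ℝ) ^ (-(ℓ : ℤ)) * Real.sqrt n with hb₂
  set M : ℝ := ‖Γ‖ * b₁ + b₂ with hM
  set w : ℕ → Fin N → ℝ := fun k => Γ.mulVec (d₁ k) + Ξ.mulVec (d₂ k) with hw
  -- explicit formula
  have formula : ∀ s : ℕ, ε s = -∑ k ∈ Finset.range s, (Φ ^ (s - 1 - k)).mulVec (w k) := by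
    intro s
    induction s with
    | zero => simp [hε0]
    | succ s ih =>
      rw [hεrec s, ih, Finset.sum_range_succ]
      have hΦlin : ∀ v : Fin N → ℝ, Φ.mulVec v = Φ.mulVecLin v := fun v => rfl
      rw [hΦlin, map_neg, map_sum]
      have hterm : ∀ k ∈ Finset.range s,
          Φ.mulVecLin ((Φ ^ (s - 1 - k)).mulVec (w k)) = (Φ ^ (s + 1 - 1 - k)).mulVec (w k) := by
        intro k hk
        rw [Finset.mem_range] at hk
        have he : s + 1 - 1 - k = (s - 1 - k) + 1 := by omega
        rw [Matrix.mulVecLin_apply, Matrix.mulVec_mulVec, he, pow_succ']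
      rw [Finset.sum_congr rfl hterm]
      have h0 : (Φ ^ (s + 1 - 1 - s)).mulVec (w s) = w s := by
        have : s + 1 - 1 - s = 0 := by omega
        rw [this, pow_zero, Matrix.one_mulVec]
      rw [h0, hw]
      module
  -- per-term norm bound
  have hb₂0 : 0 ≤ b₂ := by positivity
  have hwb : ∀ k : ℕ, e2norm (w k) ≤ M := by
    intro k
    calc e2norm (w k) ≤ e2norm (Γ.mulVec (d₁ k)) + e2norm (Ξ.mulVec (d₂ k)) :=
          e2norm_add_le _ _
      _ ≤ ‖Γ‖ * e2norm (d₁ k) + ‖Ξ‖ * e2norm (d₂ k) := by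
          gcongr <;> [exact e2norm_mulVec _ _; exact e2norm_mulVec _ _]
      _ ≤ ‖Γ‖ * b₁ + 1 * b₂ := by
          gcongr <;>
            first
              | exact hd₁ k
              | exact hd₂ k
              | exact hΞ
              | exact e2norm_nonneg _
              | exact norm_nonneg _
              | positivity
      _ = M := by ring
  have hM0 : 0 ≤ M := le_trans (e2norm_nonneg (w 0)) (hwb 0)
  -- sum bound
  have hsum : e2norm (ε t) ≤ M * (c * ∑ j ∈ Finset.range t, γ ^ j) := by
    rw [formula t, e2norm_neg]
    calc e2norm (∑ k ∈ Finset.range t, (Φ ^ (t - 1 - k)).mulVec (w k))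
        ≤ ∑ k ∈ Finset.range t, e2norm ((Φ ^ (t - 1 - k)).mulVec (w k)) :=
          e2norm_sum_le _ _
      _ ≤ ∑ k ∈ Finset.range t, (c * γ ^ (t - 1 - k)) * M := by
          apply Finset.sum_le_sum
          intro k _
          calc e2norm ((Φ ^ (t - 1 - k)).mulVec (w k))
              ≤ ‖Φ ^ (t - 1 - k)‖ * e2norm (w k) := e2norm_mulVec _ _
            _ ≤ (c * γ ^ (t - 1 - k)) * M := by
                apply mul_le_mul (hΦ _) (hwb k) (e2norm_nonneg _)
                positivity
      _ = M * (c * ∑ k ∈ Finset.range t, γ ^ (t - 1 - k)) := by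
          rw [Finset.mul_sum, Finset.mul_sum]; exact Finset.sum_congr rfl fun k _ => by ring
      _ = M * (c * ∑ j ∈ Finset.range t, γ ^ j) := by
          rw [Finset.sum_range_reflect (fun j => γ ^ j) t]
  -- geometric bound
  have hS : ∑ j ∈ Finset.range t, γ ^ j ≤ 1 / (1 - γ) := by
    have h1γ : 0 < 1 - γ := by linarith
    rw [geom_sum_eq (ne_of_lt hγ1)]
    have heq : (γ ^ t - 1) / (γ - 1) = (1 - γ ^ t) / (1 - γ) := by
      rw [div_eq_div_iff (by linarith) (by linarith : (1 : ℝ) - γ ≠ 0)]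
      ring
    rw [heq, div_le_div_iff₀ h1γ h1γ]
    have : 0 ≤ γ ^ t := by positivity
    nlinarith
  have h1γ : 0 < 1 - γ := by linarith
  have hc0 : 0 < c := lt_of_lt_of_le one_pos hc
  have hstep : e2norm (ε t) ≤ M * (c / (1 - γ)) := by
    refine le_trans hsum ?_
    have : c * ∑ j ∈ Finset.range t, γ ^ j ≤ c / (1 - γ) := by
      rw [div_eq_mul_one_div]
      exact mul_le_mul_of_nonneg_left hS (le_of_lt hc0)
    exact mul_le_mul_of_nonneg_left this hM0
  refine lt_of_le_of_lt hstep ?_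
  apply mul_lt_mul_of_pos_right _ (div_pos hc0 h1γ)
  -- M < 2^{-ℓ} ((√p/2)‖Γ‖ + 2√n)
  have h2 : (2 : ℝ) ^ (-(ℓ : ℤ) - 1) = (2 : ℝ) ^ (-(ℓ : ℤ)) / 2 := by
    rw [zpow_sub₀ (two_ne_zero), zpow_one]
  have hn0 : (0 : ℝ) < Real.sqrt n := by
    apply Real.sqrt_pos.mpr
    exact_mod_cast Nat.pos_of_ne_zero (by omega)
  have hz : (0 : ℝ) < (2 : ℝ) ^ (-(ℓ : ℤ)) := by positivity
  have hΓ0 : 0 ≤ ‖Γ‖ := norm_nonneg _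
  rw [hM, hb₁, hb₂, h2]
  nlinarith [mul_pos hz hn0]
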